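/- For every integer k ≥ 0, every real η, and every c > 0, the vertical-line integral (1/(2πi)) ∫_{L_{0+}} e^{v² + 2ηv} v^{−k−1} dv (along the upward vertical line Re v = c) equals (2^k/√π) ∫_0^∞ (ξ^k / k!) e^{−(ξ−η)²} dξ; in particular, the left-hand side is independent of c > 0. -/

import Mathlib

open MeasureTheory

/-- The integral `∫_{L_{0+}} f(v) dv = ∫_ℝ f(c + it)·i dt` along the upward vertical line
`Re v = c`. -/
noncomputable def lineInt (c : ℝ) (f : ℂ → ℂ) : ℂ :=
  ∫ t : ℝ, f (c + t * Complex.I) * Complex.I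

open Set Filter

private lemma tendsto_pow_mul_exp (n : ℕ) {b : ℝ} (hb : 0 < b) :
    Tendsto (fun x : ℝ => x ^ n * Real.exp (-b * x)) atTop (nhds 0) := by
  have h := tendsto_rpow_mul_exp_neg_mul_atTop_nhds_zero n b hb
  simpa [Real.rpow_natCast] using h

private lemma lap_integrable_real (k : ℕ) {b : ℝ} (hb : 0 < b) :
    IntegrableOn (fun x : ℝ => x ^ k * Real.exp (-b * x)) (Set.Ioi 0) := by
  apply integrable_of_isBigO_exp_neg (half_pos hb)
  · exact ((continuous_pow k).mul
      (Real.continuous_exp.comp (continuous_const.mul continuous_id))).continuousOn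
  · have h : Tendsto (fun x : ℝ => (x ^ k * Real.exp (-b * x)) / Real.exp (-(b/2) * x))
        atTop (nhds 0) := by
      refine (tendsto_pow_mul_exp k (half_pos hb)).congr' ?_
      filter_upwards [eventually_ge_atTop (0:ℝ)] with x _
      rw [mul_div_assoc, ← Real.exp_sub]
      ring_nf
    exact (Asymptotics.isLittleO_iff_tendsto
      (fun x hx => absurd hx (Real.exp_ne_zero _)) |>.2 h).isBigO

private lemma lap_integrable (k : ℕ) {v : ℂ} (hv : 0 < v.re) :
    IntegrableOn (fun x : ℝ => (x:ℂ) ^ k * Complex.exp (-(v * x))) (Set.Ioi 0) := by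
  refine ((lap_integrable_real k hv).mono' ?_ ?_)
  · exact (Continuous.aestronglyMeasurable (by fun_prop)).restrict
  · filter_upwards [ae_restrict_mem measurableSet_Ioi] with x hx
    simp only [norm_mul, norm_pow, Complex.norm_real, Real.norm_eq_abs, Complex.norm_exp]
    have h2 : (-(v * (x:ℂ))).re = -v.re * x := by simp [Complex.mul_re]
    rw [h2, abs_of_pos hx]

private lemma tendsto_cpow_mul_cexp (n : ℕ) {v : ℂ} (hv : 0 < v.re) :
    Tendsto (fun x : ℝ => (x:ℂ) ^ n * Complex.exp (-(v * x))) atTop (nhds 0) := by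
  rw [tendsto_zero_iff_norm_tendsto_zero]
  refine (tendsto_pow_mul_exp n hv).congr' ?_
  filter_upwards [eventually_ge_atTop (0:ℝ)] with x hx
  simp only [norm_mul, norm_pow, Complex.norm_real, Real.norm_eq_abs, Complex.norm_exp]
  have h2 : (-(v * (x:ℂ))).re = -v.re * x := by simp [Complex.mul_re]
  rw [h2, abs_of_nonneg hx]


private lemma hasDerivAt_cexp_neg_mul (v : ℂ) (x : ℝ) :
    HasDerivAt (fun x : ℝ => Complex.exp (-(v * x))) (Complex.exp (-(v * x)) * (-v)) x := by
  have h1 : HasDerivAt (fun x : ℝ => -(v * (x:ℂ))) (-v) x := by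
    have h0 := (Complex.ofRealCLM.hasDerivAt (x := x)).const_mul v
    simp only [Complex.ofRealCLM_apply, Complex.ofReal_one, mul_one] at h0
    exact h0.neg
  exact h1.cexp

private lemma hasDerivAt_pow_mul_cexp (n : ℕ) (v : ℂ) (x : ℝ) :
    HasDerivAt (fun x : ℝ => (x:ℂ) ^ (n+1) * Complex.exp (-(v * x)))
      (((n:ℂ)+1) * (x:ℂ) ^ n * Complex.exp (-(v * x))
        - v * ((x:ℂ) ^ (n+1) * Complex.exp (-(v * x)))) x := by
  have h1 : HasDerivAt (fun x : ℝ => (x:ℂ) ^ (n+1)) (((n:ℂ)+1) * (x:ℂ) ^ n) x := by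
    have := (hasDerivAt_pow (n+1) ((x:ℝ):ℂ)).comp_ofReal
    simpa using this
  have := h1.mul (hasDerivAt_cexp_neg_mul v x)
  convert this using 1
  · rfl
  · rfl
  · ring

private lemma lap_eval (k : ℕ) {v : ℂ} (hv : 0 < v.re) :
    ∫ x in Set.Ioi (0:ℝ), (x:ℂ) ^ k * Complex.exp (-(v * x)) = (Nat.factorial k : ℂ) / v ^ (k+1) := by
  have hv0 : v ≠ 0 := fun h => by simp [h] at hv
  induction k with
  | zero =>
      have key : ∫ x in Set.Ioi (0:ℝ), Complex.exp (-(v * x))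
          = 0 - (-v⁻¹ * Complex.exp (-(v * (0:ℝ)))) := by
        refine integral_Ioi_of_hasDerivAt_of_tendsto' (f := fun x => -v⁻¹ * Complex.exp (-(v * x)))
          (fun x _ => ?_) ?_ ?_
        · have := (hasDerivAt_cexp_neg_mul v x).const_mul (-v⁻¹)
          convert this using 1
          · rfl
          · field_simp
        · simpa using lap_integrable 0 hv
        · have := (tendsto_cpow_mul_cexp 0 hv).const_mul (-v⁻¹)
          simpa using this
      simpa [Complex.exp_zero] using key.trans (by field_simp; simp)
  | succ n ih =>
      have key : ∫ x in Set.Ioi (0:ℝ),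
          (((n:ℂ)+1) * (x:ℂ) ^ n * Complex.exp (-(v * x))
            - v * ((x:ℂ) ^ (n+1) * Complex.exp (-(v * x)))) = 0 := by
        have hint : IntegrableOn (fun x : ℝ =>
            ((n:ℂ)+1) * (x:ℂ) ^ n * Complex.exp (-(v * x))
              - v * ((x:ℂ) ^ (n+1) * Complex.exp (-(v * x)))) (Set.Ioi 0) := by
          have := ((lap_integrable n hv).const_mul ((n:ℂ)+1)).sub
            ((lap_integrable (n+1) hv).const_mul v)
          simpa [mul_assoc, Pi.sub_def, IntegrableOn] using this
        have htend : Tendsto (fun x : ℝ => (x:ℂ) ^ (n+1) * Complex.exp (-(v * x)))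
            atTop (nhds 0) := tendsto_cpow_mul_cexp (n+1) hv
        have h0 := integral_Ioi_of_hasDerivAt_of_tendsto' (a := (0:ℝ)) (m := 0)
          (f := fun x : ℝ => (x:ℂ) ^ (n+1) * Complex.exp (-(v * x)))
          (f' := fun x : ℝ => ((n:ℂ)+1) * (x:ℂ) ^ n * Complex.exp (-(v * x))
            - v * ((x:ℂ) ^ (n+1) * Complex.exp (-(v * x))))
          (fun x _ => hasDerivAt_pow_mul_cexp n v x) hint htend
        simpa using h0
      rw [integral_sub (by simpa [mul_assoc] using (lap_integrable n hv).const_mul ((n:ℂ)+1))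
        ((lap_integrable (n+1) hv).const_mul v), sub_eq_zero] at key
      have h2 : ((n:ℂ)+1) * (∫ x in Set.Ioi (0:ℝ), (x:ℂ) ^ n * Complex.exp (-(v * x)))
          = v * ∫ x in Set.Ioi (0:ℝ), (x:ℂ) ^ (n+1) * Complex.exp (-(v * x)) := by
        rw [← integral_const_mul, ← integral_const_mul]
        simp_rw [← mul_assoc] at key ⊢
        exact key
      rw [ih] at h2
      have h3 : (∫ x in Set.Ioi (0:ℝ), (x:ℂ) ^ (n+1) * Complex.exp (-(v * x)))
          = ((n:ℂ)+1) * ((Nat.factorial n : ℂ) / v ^ (n+1)) / v :=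
        (eq_div_iff hv0).mpr (by linear_combination h2.symm)
      have hvp : (v : ℂ) ^ (n+1) ≠ 0 := pow_ne_zero _ hv0
      rw [h3, Nat.factorial_succ]
      push_cast
      rw [mul_div_assoc', div_div, ← pow_succ]

/-- For every integer `k ≥ 0`, every real `η` and every `c > 0`, the vertical-line
integral `(1/(2πi)) ∫_{L_{0+}} e^{v² + 2ηv} v^{-k-1} dv` equals
`(2^k/√π) ∫_0^∞ (ξ^k/k!) e^{-(ξ-η)²} dξ`; in particular it is independent of `c > 0`. -/
theorem phi_integral_nonneg_index (k : ℕ) (η : ℝ) (c : ℝ) (hc : 0 < c) :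
    (1 / (2 * Real.pi * Complex.I)) *
        lineInt c (fun v => Complex.exp (v ^ 2 + 2 * η * v) * v ^ (-(k : ℤ) - 1))
      = (((2 : ℝ) ^ k / Real.sqrt Real.pi) *
          ∫ ξ in Set.Ioi (0 : ℝ), ξ ^ k / (Nat.factorial k : ℝ) * Real.exp (-(ξ - η) ^ 2) : ℝ) := by
  have hfac : (Nat.factorial k : ℂ) ≠ 0 := Nat.cast_ne_zero.mpr (Nat.factorial_ne_zero k)
  set F : ℝ → ℝ → ℂ := fun t x =>
    (Nat.factorial k : ℂ)⁻¹ * (x:ℂ) ^ k * Complex.I *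
      (Complex.exp (Complex.I * ((2*c+2*η-x : ℝ) : ℂ) * (t:ℂ)) * Complex.exp (-(t:ℂ)^2) *
        Complex.exp (((c^2+2*η*c-c*x : ℝ) : ℂ))) with hF
  -- step 1 : the line integrand equals the x-integral of F
  have h1 : ∀ t : ℝ,
      Complex.exp ((↑c + ↑t * Complex.I) ^ 2 + 2 * ↑η * (↑c + ↑t * Complex.I)) *
          (↑c + ↑t * Complex.I) ^ (-(k : ℤ) - 1) * Complex.I
        = ∫ x in Set.Ioi (0:ℝ), F t x := by
    intro t
    set v : ℂ := (c:ℂ) + t * Complex.I with hv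
    have hvre : 0 < v.re := by simp [hv]; exact hc
    have hv0 : v ≠ 0 := fun h => by rw [h] at hvre; simp at hvre
    have hfx : ∀ x : ℝ, F t x =
        ((Nat.factorial k : ℂ)⁻¹ * Complex.exp (v ^ 2 + 2 * η * v) * Complex.I) *
          ((x:ℂ) ^ k * Complex.exp (-(v * x))) := by
      intro x
      have e1 : Complex.exp (Complex.I * ((2*c+2*η-x : ℝ) : ℂ) * (t:ℂ)) *
            Complex.exp (-(t:ℂ)^2) * Complex.exp (((c^2+2*η*c-c*x : ℝ) : ℂ))
          = Complex.exp (v ^ 2 + 2 * η * v) * Complex.exp (-(v * x)) := by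
        rw [← Complex.exp_add, ← Complex.exp_add, ← Complex.exp_add]
        congr 1
        rw [hv]
        push_cast
        linear_combination (-(t:ℂ)^2) * Complex.I_sq
      rw [hF]
      simp only
      rw [e1]
      ring
    have hrw : (fun x : ℝ => F t x) = fun x : ℝ =>
        ((Nat.factorial k : ℂ)⁻¹ * Complex.exp (v ^ 2 + 2 * η * v) * Complex.I) *
          ((x:ℂ) ^ k * Complex.exp (-(v * x))) := funext hfx
    rw [hrw, integral_const_mul, lap_eval k hvre]
    have hzp : v ^ (-(k : ℤ) - 1) = (v ^ (k+1))⁻¹ := by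
      rw [show (-(k:ℤ) - 1) = -((k+1 : ℕ) : ℤ) by push_cast; ring, zpow_neg, zpow_natCast]
    rw [hzp]
    have hvp : v ^ (k+1) ≠ 0 := pow_ne_zero _ hv0
    field_simp
  -- step 2 : integrability of F on the product
  have hFint : Integrable (Function.uncurry F)
      ((volume : Measure ℝ).prod ((volume : Measure ℝ).restrict (Set.Ioi 0))) := by
    have hg1 : Integrable (fun t : ℝ => Real.exp (-t^2)) := by
      simpa using integrable_exp_neg_mul_sq (one_pos)
    have hg2 : IntegrableOn (fun x : ℝ =>
        (Nat.factorial k : ℝ)⁻¹ * Real.exp (c^2+2*η*c) * (|x| ^ k * Real.exp (-c*x)))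
        (Set.Ioi 0) := by
      exact Integrable.const_mul ((lap_integrable_real k hc).congr_fun
        (fun x hx => by rw [abs_of_pos hx]) measurableSet_Ioi) _
    have hg : Integrable (fun p : ℝ × ℝ => Real.exp (-p.1^2) *
        ((Nat.factorial k : ℝ)⁻¹ * Real.exp (c^2+2*η*c) * (|p.2| ^ k * Real.exp (-c*p.2))))
        ((volume : Measure ℝ).prod ((volume : Measure ℝ).restrict (Set.Ioi 0))) :=
      hg1.mul_prod hg2
    refine hg.mono' ?_ ?_
    · refine Continuous.aestronglyMeasurable ?_
      rw [hF]
      fun_prop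
    · refine Filter.Eventually.of_forall (fun p => ?_)
      rw [hF]
      simp only [Function.uncurry]
      have r1 : (Complex.I * ((2*c+2*η-p.2 : ℝ) : ℂ) * ((p.1:ℝ):ℂ)).re = 0 := by
        simp [Complex.mul_re]
      have r2 : (-((p.1:ℝ):ℂ)^2).re = -p.1^2 := by
        simp [Complex.mul_re, pow_two]
      have r3 : (((c^2+2*η*c-c*p.2 : ℝ) : ℂ)).re = c^2+2*η*c-c*p.2 := Complex.ofReal_re _
      simp only [norm_mul, norm_inv, Complex.norm_natCast, norm_pow, Complex.norm_real,
        Real.norm_eq_abs, Complex.norm_I, Complex.norm_exp, Complex.norm_natCast, r1, r2, r3,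
        Real.exp_zero]
      rw [show c^2+2*η*c-c*p.2 = (c^2+2*η*c) + -(c*p.2) by ring, Real.exp_add, ← neg_mul]
      exact le_of_eq (by ring)
  -- step 3 : the inner t-integral
  have h3 : ∀ x : ℝ, (∫ t : ℝ, F t x)
      = (Complex.I * (Real.sqrt Real.pi : ℂ)) *
          ((Nat.factorial k : ℂ)⁻¹ * (x:ℂ) ^ k * Complex.exp (((-(x/2-η)^2 : ℝ)) : ℂ)) := by
    intro x
    have hgauss := fourierIntegral_gaussian (b := (1:ℂ)) (by norm_num) ((2*c+2*η-x : ℝ) : ℂ)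
    have hsq : ((Real.sqrt Real.pi : ℝ) : ℂ) = (Real.pi : ℂ) ^ (1/2 : ℂ) := by
      rw [Real.sqrt_eq_rpow, Complex.ofReal_cpow Real.pi_pos.le]
      norm_num
    have hpull : (fun t : ℝ => F t x) = fun t : ℝ =>
        ((Nat.factorial k : ℂ)⁻¹ * (x:ℂ) ^ k * Complex.I *
          Complex.exp (((c^2+2*η*c-c*x : ℝ) : ℂ))) *
          (Complex.exp (Complex.I * ((2*c+2*η-x : ℝ) : ℂ) * (t:ℂ)) *
            Complex.exp (-1 * (t:ℂ)^2)) := by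
      funext t
      rw [hF]
      simp only
      rw [neg_one_mul]
      ring
    rw [hpull, integral_const_mul, hgauss, div_one, ← hsq]
    have hcomb : Complex.exp (((c^2+2*η*c-c*x : ℝ)):ℂ) *
        Complex.exp (-(((2*c+2*η-x : ℝ) : ℂ))^2 / (4*1))
        = Complex.exp (((-(x/2-η)^2 : ℝ)) : ℂ) := by
      rw [← Complex.exp_add]
      congr 1
      push_cast
      ring
    rw [← hcomb]
    ring
  -- step 4 : put everything together
  have h2' : lineInt c (fun v => Complex.exp (v ^ 2 + 2 * η * v) * v ^ (-(k : ℤ) - 1))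
      = ∫ t : ℝ, ∫ x in Set.Ioi (0:ℝ), F t x := by
    unfold lineInt
    exact integral_congr_ae (Filter.Eventually.of_forall (fun t => h1 t))
  rw [h2']
  rw [integral_integral_swap hFint]
  have h5 : (fun x : ℝ => ∫ t : ℝ, F t x) = fun x : ℝ =>
      (Complex.I * (Real.sqrt Real.pi : ℂ)) *
        ((x ^ k / (Nat.factorial k : ℝ) * Real.exp (-(x/2-η)^2) : ℝ) : ℂ) := by
    funext x
    rw [h3 x, ← Complex.ofReal_exp]
    push_cast
    ring
  set J : ℝ := ∫ x in Set.Ioi (0:ℝ), x ^ k / (Nat.factorial k : ℝ) * Real.exp (-(x/2-η)^2)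
    with hJ
  set T : ℝ := ∫ ξ in Set.Ioi (0:ℝ), ξ ^ k / (Nat.factorial k : ℝ) * Real.exp (-(ξ-η)^2)
    with hT
  have hJC : (∫ x in Set.Ioi (0:ℝ),
      ((x ^ k / (Nat.factorial k : ℝ) * Real.exp (-(x/2-η)^2) : ℝ) : ℂ)) = (J : ℂ) := by
    rw [hJ]; exact integral_ofReal
  rw [h5, integral_const_mul, hJC]
  have hJT : J = 2 * (2 ^ k * T) := by
    have hsub := integral_comp_mul_left_Ioi
      (g := fun y : ℝ => y ^ k / (Nat.factorial k : ℝ) * Real.exp (-(y/2-η)^2)) 0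
      (b := (2:ℝ)) two_pos
    simp only [mul_zero] at hsub
    have hcongr : (fun x : ℝ => (2*x) ^ k / (Nat.factorial k : ℝ) * Real.exp (-((2*x)/2-η)^2))
        = fun x : ℝ => 2 ^ k * (x ^ k / (Nat.factorial k : ℝ) * Real.exp (-(x-η)^2)) := by
      funext x
      rw [show (2*x)/2-η = x-η by ring, mul_pow]
      ring
    rw [hcongr] at hsub
    rw [integral_const_mul] at hsub
    rw [smul_eq_mul] at hsub
    rw [hJ, hT]
    linarith [hsub]
  have hpi : Real.sqrt Real.pi ≠ 0 := by positivity
  have hreal : Real.sqrt Real.pi * J / (2 * Real.pi)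
      = 2 ^ k / Real.sqrt Real.pi * T := by
    rw [hJT]
    field_simp
    linear_combination T * Real.mul_self_sqrt Real.pi_pos.le
  rw [← hreal]
  have hI : (Complex.I : ℂ) ≠ 0 := Complex.I_ne_zero
  have hpi' : (Real.pi : ℂ) ≠ 0 := Complex.ofReal_ne_zero.mpr Real.pi_ne_zero
  push_cast
  field_simp
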